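/- Let q be a complex number with 0 < |q| < 1. Define the sequence α by α_0 = 1/(1−q), and for n ≥ 1: α_{3n−1} = 0, and for n ≥ 1: α_{3n} = (q^{6n²+n} − q^{6n²+7n+2})/((1−q)(1−q²)), and for n ≥ 0: α_{3n+1} = (−q^{6n²+5n+1} + q^{6n²+11n+5})/((1−q)(1−q²)). Then for every integer n ≥ 0, 1/(q;q)_{2n+1} = ∑_{i=0}^n α_i / ((q;q)_{n−i} (q^3;q)_{n+i}); that is, (α_n, 1/(q;q)_{2n+1}) is a Bailey pair relative to (q^2;q). -/

import Mathlib

open scoped BigOperators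

/-- Finite q-Pochhammer symbol $(a;q)_n = \prod_{k=0}^{n-1}(1-aq^k)$. -/
noncomputable def qPoch (a q : ℂ) (n : ℕ) : ℂ := ∏ k ∈ Finset.range n, (1 - a * q ^ k)

/-- Infinite q-Pochhammer symbol $(a;q)_\infty = \prod_{k=0}^{\infty}(1-aq^k)$. -/
noncomputable def qPochInf (a q : ℂ) : ℂ := ∏' k : ℕ, (1 - a * q ^ k)

/-- Jacobi theta function $j(z;q) = (z;q)_\infty (q/z;q)_\infty (q;q)_\infty$. -/
noncomputable def jt (z q : ℂ) : ℂ := qPochInf z q * qPochInf (q / z) q * qPochInf q q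

/-- $J_{a,m} = j(q^a;q^m)$. -/
noncomputable def Jq (q : ℂ) (a m : ℕ) : ℂ := jt (q ^ a) (q ^ m)

/-- $\bar J_{a,m} = j(-q^a;q^m)$. -/
noncomputable def Jbq (q : ℂ) (a m : ℕ) : ℂ := jt (-q ^ a) (q ^ m)

/-- $J_m = (q^m;q^m)_\infty$. -/
noncomputable def Jmq (q : ℂ) (m : ℕ) : ℂ := qPochInf (q ^ m) (q ^ m)

/-- sign function: 1 for r ≥ 0, -1 for r < 0. -/
noncomputable def sg (r : ℤ) : ℂ := if 0 ≤ r then 1 else -1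

/-- Hecke-type series
$f_{a,b,c}(x,y,q) = \sum_{sg(r)=sg(s)} sg(r)(-1)^{r+s} x^r y^s q^{a\binom r2 + brs + c\binom s2}$. -/
noncomputable def hecke (a b c : ℤ) (x y q : ℂ) : ℂ :=
  ∑' p : ℤ × ℤ,
    if (0 ≤ p.1 ↔ 0 ≤ p.2) then
      sg p.1 * (-1 : ℂ) ^ (p.1 + p.2) * x ^ p.1 * y ^ p.2 *
        q ^ (a * (p.1 * (p.1 - 1) / 2) + b * p.1 * p.2 + c * (p.2 * (p.2 - 1) / 2))
    else 0

/-- Appell–Lerch sum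
$m(x,q,z) = \frac{1}{j(z;q)} \sum_{r\in\mathbb Z} \frac{(-1)^r q^{\binom r2} z^r}{1-q^{r-1}xz}$. -/
noncomputable def appell (x q z : ℂ) : ℂ :=
  (1 / jt z q) *
    ∑' r : ℤ, (-1 : ℂ) ^ r * q ^ (r * (r - 1) / 2) * z ^ r / (1 - q ^ (r - 1) * x * z)

lemma qPoch_zero (a q : ℂ) : qPoch a q 0 = 1 := Finset.prod_range_zero _

lemma qPoch_succ (a q : ℂ) (n : ℕ) :
    qPoch a q (n + 1) = qPoch a q n * (1 - a * q ^ n) := Finset.prod_range_succ _ _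

lemma P_succ (q : ℂ) (n : ℕ) :
    qPoch q q (n + 1) = qPoch q q n * (1 - q ^ (n + 1)) := by
  rw [qPoch_succ, pow_succ']

lemma Q_succ (q : ℂ) (n : ℕ) :
    qPoch (q ^ 3) q (n + 1) = qPoch (q ^ 3) q n * (1 - q ^ (n + 3)) := by
  rw [qPoch_succ]
  congr 2
  rw [← pow_add]
  ring

lemma P_ne (q : ℂ) (hq : ∀ k : ℕ, 1 - q ^ (k + 1) ≠ 0) (n : ℕ) : qPoch q q n ≠ 0 := by
  induction n with
  | zero => simp [qPoch_zero]
  | succ n ih => rw [P_succ]; exact mul_ne_zero ih (hq n)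

lemma Q_ne (q : ℂ) (hq : ∀ k : ℕ, 1 - q ^ (k + 1) ≠ 0) (n : ℕ) : qPoch (q ^ 3) q n ≠ 0 := by
  induction n with
  | zero => simp [qPoch_zero]
  | succ n ih =>
    rw [Q_succ]
    refine mul_ne_zero ih ?_
    have := hq (n + 2)
    rwa [show n + 2 + 1 = n + 3 from by omega] at this

lemma P2Q (q : ℂ) (n : ℕ) :
    qPoch q q (n + 2) = (1 - q) * (1 - q ^ 2) * qPoch (q ^ 3) q n := by
  induction n with
  | zero =>
    show qPoch q q 2 = _
    rw [show (2 : ℕ) = 0 + 1 + 1 from rfl, P_succ, P_succ, qPoch_zero, qPoch_zero]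
    ring
  | succ n ih =>
    rw [show n + 1 + 2 = (n + 2) + 1 from by omega, P_succ, ih, Q_succ]
    ring

noncomputable def gg (q : ℂ) (α : ℕ → ℂ) (ν i : ℕ) : ℂ :=
  α i * ((1 - q ^ (2 * ν)) * (1 - q ^ (2 * ν + 1)) -
      (1 - q ^ (ν - i)) * (1 - q ^ (ν + 2 + i))) /
    (qPoch q q (ν - i) * qPoch (q ^ 3) q (ν + i))

noncomputable def CC0 (q : ℂ) (t s : ℕ) : ℂ :=
  q ^ (6*t^2 + 5*t + 1*s + 1) - q ^ (6*t^2 + 13*t + 1*s + 5) - q ^ (6*t^2 + 11*t + 2*s + 3) - q ^ (6*t^2 + 11*t + 2*s + 4) - q ^ (6*t^2 + 11*t + 2*s + 5) + q ^ (6*t^2 + 13*t + 2*s + 4) + q ^ (6*t^2 + 13*t + 2*s + 5) + q ^ (6*t^2 + 19*t + 2*s + 9) - q ^ (6*t^2 + 13*t + 3*s + 4) + q ^ (6*t^2 + 17*t + 3*s + 6) + q ^ (6*t^2 + 17*t + 3*s + 7) + q ^ (6*t^2 + 17*t + 3*s + 8) - q ^ (6*t^2 + 19*t + 3*s + 8)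 - q ^ (6*t^2 + 19*t + 3*s + 9) + q ^ (6*t^2 + 19*t + 4*s + 8) - q ^ (6*t^2 + 23*t + 4*s + 10)

noncomputable def CC1 (q : ℂ) (t s : ℕ) : ℂ :=
  - q ^ (6*t^2 + 13*t + 1*s + 6) + q ^ (6*t^2 + 17*t + 1*s + 10) + q ^ (6*t^2 + 13*t + 2*s + 6) - q ^ (6*t^2 + 17*t + 2*s + 9) - q ^ (6*t^2 + 17*t + 2*s + 10) + q ^ (6*t^2 + 19*t + 2*s + 11) + q ^ (6*t^2 + 19*t + 2*s + 12) - q ^ (6*t^2 + 23*t + 2*s + 16) + q ^ (6*t^2 + 17*t + 3*s + 9) - q ^ (6*t^2 + 19*t + 3*s + 11) - q ^ (6*t^2 + 19*t + 3*s + 12) + q ^ (6*t^2 + 23*t + 3*s + 15) + q ^ (6*t^2 + 23*t + 3*s + 16) - q ^ (6*t^2 + 25*t + 3*s + 17) - q ^ (6*t^2 + 23*t + 4*s + 15) + q ^ (6*t^2 + 25*t + 4*s + 17)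

noncomputable def CC2 (q : ℂ) (t s : ℕ) : ℂ :=
  - q ^ (6*t^2 + 13*t + 1*s + 7) + q ^ (6*t^2 + 17*t + 1*s + 11) - q ^ (6*t^2 + 17*t + 2*s + 11) + q ^ (6*t^2 + 19*t + 2*s + 13) + q ^ (6*t^2 + 19*t + 2*s + 14) + q ^ (6*t^2 + 19*t + 2*s + 15) - q ^ (6*t^2 + 23*t + 2*s + 18) - q ^ (6*t^2 + 23*t + 2*s + 19) + q ^ (6*t^2 + 23*t + 3*s + 18) + q ^ (6*t^2 + 23*t + 3*s + 19) - q ^ (6*t^2 + 25*t + 3*s + 20) - q ^ (6*t^2 + 25*t + 3*s + 21) - q ^ (6*t^2 + 25*t + 3*s + 22) + q ^ (6*t^2 + 29*t + 3*s + 26) - q ^ (6*t^2 + 29*t + 4*s + 26) + q ^ (6*t^2 + 31*t + 4*s + 28)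

lemma tel0 (q : ℂ) (hq : ∀ k : ℕ, 1 - q ^ (k + 1) ≠ 0) (α : ℕ → ℂ)
    (hα0 : α 0 = 1 / (1 - q)) (s : ℕ) :
    ∑ i ∈ Finset.range (3 * 0 + 1), gg q α (3 * 0 + 1 + s) i =
      CC0 q 0 s / (qPoch q q s * qPoch q q (6 * 0 + s + 4)) := by
  have h1 : (1 : ℂ) - q ≠ 0 := by have := hq 0; rwa [pow_one] at this
  have h2 : (1 : ℂ) - q ^ 2 ≠ 0 := by have := hq 1; rwa [show (1 : ℕ) + 1 = 2 from rfl] at this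
  have hx := P_ne q hq s
  have hy := Q_ne q hq s
  have ha := hq s
  have hb : (1 : ℂ) - q ^ (s + 4) ≠ 0 := by
    have := hq (s + 3); rwa [show s + 3 + 1 = s + 4 from by omega] at this
  rw [show 3 * 0 + 1 = 0 + 1 from rfl, Finset.sum_range_succ, Finset.sum_range_zero, zero_add]
  simp only [gg, hα0]
  have hc : (1 : ℂ) - q ^ (s + 3) ≠ 0 := by
    have := hq (s + 2); rwa [show s + 2 + 1 = s + 3 from by omega] at this
  rw [show 3 * 0 + 1 + s - 0 = s + 1 from by omega, show 3 * 0 + 1 + s + 0 = s + 1 from by omega,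
    P_succ, Q_succ,
    show 6 * 0 + s + 4 = (s + 2) + 2 from by omega, P2Q,
    show s + 2 = s + 1 + 1 from rfl, Q_succ, Q_succ,
    show s + 1 + 3 = s + 4 from by omega]
  rw [div_mul_eq_mul_div, div_div, one_mul]
  rw [div_eq_div_iff (by
      exact mul_ne_zero h1 (mul_ne_zero (mul_ne_zero hx ha) (mul_ne_zero hy hc)))
    (by
      refine mul_ne_zero hx (mul_ne_zero (mul_ne_zero h1 h2) ?_)
      exact mul_ne_zero (mul_ne_zero hy hc) hb)]
  simp only [CC0]
  ring

lemma tel01 (q : ℂ) (hq : ∀ k : ℕ, 1 - q ^ (k + 1) ≠ 0) (α : ℕ → ℂ)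
    (hα3 : ∀ n : ℕ, α (3 * n + 1) =
      (-q ^ (6 * n ^ 2 + 5 * n + 1) + q ^ (6 * n ^ 2 + 11 * n + 5)) / ((1 - q) * (1 - q ^ 2)))
    (t : ℕ)
    (ih : ∀ s : ℕ, ∑ i ∈ Finset.range (3 * t + 1), gg q α (3 * t + 1 + s) i =
      CC0 q t s / (qPoch q q s * qPoch q q (6 * t + s + 4))) (s : ℕ) :
    ∑ i ∈ Finset.range (3 * t + 2), gg q α (3 * t + 2 + s) i =
      CC1 q t s / (qPoch q q s * qPoch q q (6 * t + s + 6)) := by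
  have h1 : (1 : ℂ) - q ≠ 0 := by have := hq 0; rwa [pow_one] at this
  have h2 : (1 : ℂ) - q ^ 2 ≠ 0 := by have := hq 1; rwa [show (1 : ℕ) + 1 = 2 from rfl] at this
  have hx := P_ne q hq s
  have hy := Q_ne q hq (6 * t + s + 3)
  have ha := hq s
  have hb : (1 : ℂ) - q ^ (6 * t + s + 3 + 2 + 1) ≠ 0 := hq (6 * t + s + 3 + 2)
  have h := ih (s + 1)
  rw [show 3 * t + 1 + (s + 1) = 3 * t + 2 + s from by omega,
    show 6 * t + (s + 1) + 4 = 6 * t + s + 5 from by omega] at h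
  rw [show 3 * t + 2 = 3 * t + 1 + 1 from by omega, Finset.sum_range_succ, h]
  simp only [gg, hα3 t]
  rw [show 3 * t + 2 + s - (3 * t + 1) = s + 1 from by omega,
    show 3 * t + 2 + s + (3 * t + 1) = 6 * t + s + 3 from by omega]
  rw [P_succ q s,
    show 6 * t + s + 5 = 6 * t + s + 3 + 2 from by omega,
    show 6 * t + s + 6 = 6 * t + s + 3 + 2 + 1 from by omega,
    P_succ q (6 * t + s + 3 + 2), P2Q q (6 * t + s + 3)]
  rw [div_mul_eq_mul_div, div_div]
  rw [div_add_div _ _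
    (mul_ne_zero (mul_ne_zero hx ha) (mul_ne_zero (mul_ne_zero h1 h2) hy))
    (mul_ne_zero (mul_ne_zero h1 h2) (mul_ne_zero (mul_ne_zero hx ha) hy))]
  rw [div_eq_div_iff (mul_ne_zero (mul_ne_zero (mul_ne_zero hx ha) (mul_ne_zero (mul_ne_zero h1 h2) hy)) (mul_ne_zero (mul_ne_zero h1 h2) (mul_ne_zero (mul_ne_zero hx ha) hy))) (mul_ne_zero hx (mul_ne_zero (mul_ne_zero (mul_ne_zero h1 h2) hy) hb))]
  simp only [CC0, CC1]
  ring

lemma tel12 (q : ℂ) (hq : ∀ k : ℕ, 1 - q ^ (k + 1) ≠ 0) (α : ℕ → ℂ)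
    (hα1 : ∀ n : ℕ, 1 ≤ n → α (3 * n - 1) = 0)
    (t : ℕ)
    (ih : ∀ s : ℕ, ∑ i ∈ Finset.range (3 * t + 2), gg q α (3 * t + 2 + s) i =
      CC1 q t s / (qPoch q q s * qPoch q q (6 * t + s + 6))) (s : ℕ) :
    ∑ i ∈ Finset.range (3 * t + 3), gg q α (3 * t + 3 + s) i =
      CC2 q t s / (qPoch q q s * qPoch q q (6 * t + s + 8)) := by
  have hx := P_ne q hq s
  have hy := P_ne q hq (6 * t + s + 7)
  have ha := hq s
  have hb : (1 : ℂ) - q ^ (6 * t + s + 7 + 1) ≠ 0 := hq (6 * t + s + 7)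
  have hz : α (3 * t + 2) = 0 := by
    have := hα1 (t + 1) (by omega)
    rwa [show 3 * (t + 1) - 1 = 3 * t + 2 from by omega] at this
  have h := ih (s + 1)
  rw [show 3 * t + 2 + (s + 1) = 3 * t + 3 + s from by omega,
    show 6 * t + (s + 1) + 6 = 6 * t + s + 7 from by omega] at h
  rw [show 3 * t + 3 = 3 * t + 2 + 1 from by omega, Finset.sum_range_succ, h]
  simp only [gg, hz, zero_mul, zero_div, add_zero]
  rw [P_succ q s, show 6 * t + s + 8 = 6 * t + s + 7 + 1 from by omega, P_succ q (6 * t + s + 7)]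
  rw [div_eq_div_iff (mul_ne_zero (mul_ne_zero hx ha) hy) (mul_ne_zero hx (mul_ne_zero hy hb))]
  simp only [CC1, CC2]
  ring

lemma tel20 (q : ℂ) (hq : ∀ k : ℕ, 1 - q ^ (k + 1) ≠ 0) (α : ℕ → ℂ)
    (hα2 : ∀ n : ℕ, 1 ≤ n → α (3 * n) =
      (q ^ (6 * n ^ 2 + n) - q ^ (6 * n ^ 2 + 7 * n + 2)) / ((1 - q) * (1 - q ^ 2)))
    (t : ℕ)
    (ih : ∀ s : ℕ, ∑ i ∈ Finset.range (3 * t + 3), gg q α (3 * t + 3 + s) i =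
      CC2 q t s / (qPoch q q s * qPoch q q (6 * t + s + 8))) (s : ℕ) :
    ∑ i ∈ Finset.range (3 * (t + 1) + 1), gg q α (3 * (t + 1) + 1 + s) i =
      CC0 q (t + 1) s / (qPoch q q s * qPoch q q (6 * (t + 1) + s + 4)) := by
  have h1 : (1 : ℂ) - q ≠ 0 := by have := hq 0; rwa [pow_one] at this
  have h2 : (1 : ℂ) - q ^ 2 ≠ 0 := by have := hq 1; rwa [show (1 : ℕ) + 1 = 2 from rfl] at this
  have hx := P_ne q hq s
  have hy := Q_ne q hq (6 * t + s + 7)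
  have ha := hq s
  have hb : (1 : ℂ) - q ^ (6 * t + s + 7 + 2 + 1) ≠ 0 := hq (6 * t + s + 7 + 2)
  have hα' : α (3 * t + 3) =
      (q ^ (6 * (t + 1) ^ 2 + (t + 1)) - q ^ (6 * (t + 1) ^ 2 + 7 * (t + 1) + 2)) /
        ((1 - q) * (1 - q ^ 2)) := by
    have := hα2 (t + 1) (by omega)
    rwa [show 3 * (t + 1) = 3 * t + 3 from by omega] at this
  have h := ih (s + 1)
  rw [show 3 * t + 3 + (s + 1) = 3 * t + 3 + 1 + s from by omega,
    show 6 * t + (s + 1) + 8 = 6 * t + s + 7 + 2 from by omega] at h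
  rw [show 3 * (t + 1) + 1 = 3 * t + 3 + 1 from by omega, Finset.sum_range_succ, h]
  simp only [gg, hα']
  rw [show 3 * t + 3 + 1 + s - (3 * t + 3) = s + 1 from by omega,
    show 3 * t + 3 + 1 + s + (3 * t + 3) = 6 * t + s + 7 from by omega]
  rw [P_succ q s,
    show 6 * (t + 1) + s + 4 = 6 * t + s + 7 + 2 + 1 from by omega,
    P_succ q (6 * t + s + 7 + 2), P2Q q (6 * t + s + 7)]
  rw [div_mul_eq_mul_div, div_div]
  rw [div_add_div _ _
    (mul_ne_zero (mul_ne_zero hx ha) (mul_ne_zero (mul_ne_zero h1 h2) hy))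
    (mul_ne_zero (mul_ne_zero h1 h2) (mul_ne_zero (mul_ne_zero hx ha) hy))]
  rw [div_eq_div_iff (mul_ne_zero (mul_ne_zero (mul_ne_zero hx ha) (mul_ne_zero (mul_ne_zero h1 h2) hy)) (mul_ne_zero (mul_ne_zero h1 h2) (mul_ne_zero (mul_ne_zero hx ha) hy))) (mul_ne_zero hx (mul_ne_zero (mul_ne_zero (mul_ne_zero h1 h2) hy) hb))]
  simp only [CC0, CC2]
  ring

lemma telAll (q : ℂ) (hq : ∀ k : ℕ, 1 - q ^ (k + 1) ≠ 0) (α : ℕ → ℂ)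
    (hα0 : α 0 = 1 / (1 - q))
    (hα1 : ∀ n : ℕ, 1 ≤ n → α (3 * n - 1) = 0)
    (hα2 : ∀ n : ℕ, 1 ≤ n → α (3 * n) =
      (q ^ (6 * n ^ 2 + n) - q ^ (6 * n ^ 2 + 7 * n + 2)) / ((1 - q) * (1 - q ^ 2)))
    (hα3 : ∀ n : ℕ, α (3 * n + 1) =
      (-q ^ (6 * n ^ 2 + 5 * n + 1) + q ^ (6 * n ^ 2 + 11 * n + 5)) / ((1 - q) * (1 - q ^ 2)))
    (t : ℕ) :
    (∀ s : ℕ, ∑ i ∈ Finset.range (3 * t + 1), gg q α (3 * t + 1 + s) i =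
      CC0 q t s / (qPoch q q s * qPoch q q (6 * t + s + 4))) ∧
    (∀ s : ℕ, ∑ i ∈ Finset.range (3 * t + 2), gg q α (3 * t + 2 + s) i =
      CC1 q t s / (qPoch q q s * qPoch q q (6 * t + s + 6))) ∧
    (∀ s : ℕ, ∑ i ∈ Finset.range (3 * t + 3), gg q α (3 * t + 3 + s) i =
      CC2 q t s / (qPoch q q s * qPoch q q (6 * t + s + 8))) := by
  induction t with
  | zero =>
    have h0 : ∀ s : ℕ, ∑ i ∈ Finset.range (3 * 0 + 1), gg q α (3 * 0 + 1 + s) i =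
        CC0 q 0 s / (qPoch q q s * qPoch q q (6 * 0 + s + 4)) := tel0 q hq α hα0
    have h1 := tel01 q hq α hα3 0 h0
    have h2 := tel12 q hq α hα1 0 h1
    exact ⟨h0, h1, h2⟩
  | succ t ih =>
    have h0 := tel20 q hq α hα2 t ih.2.2
    have h1 := tel01 q hq α hα3 (t + 1) h0
    have h2 := tel12 q hq α hα1 (t + 1) h1
    exact ⟨h0, h1, h2⟩

lemma Nlem (q : ℂ) (hq : ∀ k : ℕ, 1 - q ^ (k + 1) ≠ 0) (α : ℕ → ℂ)
    (hα0 : α 0 = 1 / (1 - q))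
    (hα1 : ∀ n : ℕ, 1 ≤ n → α (3 * n - 1) = 0)
    (hα2 : ∀ n : ℕ, 1 ≤ n → α (3 * n) =
      (q ^ (6 * n ^ 2 + n) - q ^ (6 * n ^ 2 + 7 * n + 2)) / ((1 - q) * (1 - q ^ 2)))
    (hα3 : ∀ n : ℕ, α (3 * n + 1) =
      (-q ^ (6 * n ^ 2 + 5 * n + 1) + q ^ (6 * n ^ 2 + 11 * n + 5)) / ((1 - q) * (1 - q ^ 2)))
    (ν : ℕ) (hν : 1 ≤ ν) :
    ∑ i ∈ Finset.range (ν + 1), gg q α ν i = 0 := by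
  have h1 : (1 : ℂ) - q ≠ 0 := by have := hq 0; rwa [pow_one] at this
  have h2 : (1 : ℂ) - q ^ 2 ≠ 0 := by have := hq 1; rwa [show (1 : ℕ) + 1 = 2 from rfl] at this
  obtain ⟨t, ht⟩ : ∃ t, ν = 3 * t + 1 ∨ ν = 3 * t + 2 ∨ ν = 3 * t + 3 := ⟨(ν - 1) / 3, by omega⟩
  rcases ht with rfl | rfl | rfl
  · -- ν = 3t+1
    have hy := Q_ne q hq (6 * t + 2)
    have h := (telAll q hq α hα0 hα1 hα2 hα3 t).1 0
    rw [show 3 * t + 1 + 0 = 3 * t + 1 from by omega,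
      show 6 * t + 0 + 4 = 6 * t + 2 + 2 from by omega, P2Q q (6 * t + 2)] at h
    rw [Finset.sum_range_succ, h]
    simp only [gg, hα3 t]
    rw [show 3 * t + 1 - (3 * t + 1) = 0 from by omega,
      show 3 * t + 1 + (3 * t + 1) = 6 * t + 2 from by omega, qPoch_zero]
    simp only [one_mul]
    rw [div_mul_eq_mul_div, div_div]
    rw [div_add_div _ _ (mul_ne_zero (mul_ne_zero h1 h2) hy)
      (mul_ne_zero (mul_ne_zero h1 h2) hy), div_eq_zero_iff]
    left
    simp only [CC0]
    ring
  · -- ν = 3t+2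
    have hz : α (3 * t + 2) = 0 := by
      have := hα1 (t + 1) (by omega)
      rwa [show 3 * (t + 1) - 1 = 3 * t + 2 from by omega] at this
    have h := (telAll q hq α hα0 hα1 hα2 hα3 t).2.1 0
    rw [show 3 * t + 2 + 0 = 3 * t + 2 from by omega] at h
    rw [Finset.sum_range_succ, h]
    simp only [gg, hz, zero_mul, zero_div, add_zero]
    have hc : CC1 q t 0 = 0 := by simp only [CC1]; ring
    rw [hc, zero_div]
  · -- ν = 3t+3
    have hy := Q_ne q hq (6 * t + 6)
    have hα' : α (3 * t + 3) =
        (q ^ (6 * (t + 1) ^ 2 + (t + 1)) - q ^ (6 * (t + 1) ^ 2 + 7 * (t + 1) + 2)) /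
          ((1 - q) * (1 - q ^ 2)) := by
      have := hα2 (t + 1) (by omega)
      rwa [show 3 * (t + 1) = 3 * t + 3 from by omega] at this
    have h := (telAll q hq α hα0 hα1 hα2 hα3 t).2.2 0
    rw [show 3 * t + 3 + 0 = 3 * t + 3 from by omega,
      show 6 * t + 0 + 8 = 6 * t + 6 + 2 from by omega, P2Q q (6 * t + 6)] at h
    rw [Finset.sum_range_succ, h]
    simp only [gg, hα']
    rw [show 3 * t + 3 - (3 * t + 3) = 0 from by omega,
      show 3 * t + 3 + (3 * t + 3) = 6 * t + 6 from by omega, qPoch_zero]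
    simp only [one_mul]
    rw [div_mul_eq_mul_div, div_div]
    rw [div_add_div _ _ (mul_ne_zero (mul_ne_zero h1 h2) hy)
      (mul_ne_zero (mul_ne_zero h1 h2) hy), div_eq_zero_iff]
    left
    simp only [CC2]
    ring

theorem stmt4 (q : ℂ) (hq0 : 0 < ‖q‖) (hq1 : ‖q‖ < 1)
    (α : ℕ → ℂ) (hα0 : α 0 = 1 / (1 - q))
    (hα1 : ∀ n : ℕ, 1 ≤ n → α (3 * n - 1) = 0)
    (hα2 : ∀ n : ℕ, 1 ≤ n →
      α (3 * n) = (q ^ (6 * n ^ 2 + n) - q ^ (6 * n ^ 2 + 7 * n + 2)) / ((1 - q) * (1 - q ^ 2)))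
    (hα3 : ∀ n : ℕ,
      α (3 * n + 1) =
        (-q ^ (6 * n ^ 2 + 5 * n + 1) + q ^ (6 * n ^ 2 + 11 * n + 5)) / ((1 - q) * (1 - q ^ 2))) :
    ∀ n : ℕ, 1 / qPoch q q (2 * n + 1) =
      ∑ i ∈ Finset.range (n + 1), α i / (qPoch q q (n - i) * qPoch (q ^ 3) q (n + i)) := by
  have hq : ∀ k : ℕ, 1 - q ^ (k + 1) ≠ 0 := by
    intro k h
    have h1 : q ^ (k + 1) = 1 := by linear_combination -h
    have h2 : ‖q ^ (k + 1)‖ = 1 := by rw [h1, norm_one]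
    rw [norm_pow] at h2
    have h3 : ‖q‖ ^ (k + 1) < 1 :=
      pow_lt_one₀ (norm_nonneg q) hq1 (Nat.succ_ne_zero k)
    rw [h2] at h3
    exact lt_irrefl 1 h3
  intro n
  induction n with
  | zero =>
    rw [Finset.sum_range_one, hα0]
    norm_num [qPoch_zero]
    rw [show (1 : ℕ) = 0 + 1 from rfl, P_succ q 0, qPoch_zero, one_mul, zero_add, pow_one]
  | succ n ih =>
    have hN := Nlem q hq α hα0 hα1 hα2 hα3 (n + 1) (by omega)
    set S' := ∑ i ∈ Finset.range (n + 1 + 1),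
      α i / (qPoch q q (n + 1 - i) * qPoch (q ^ 3) q (n + 1 + i)) with hS'
    have hsum : ∑ i ∈ Finset.range (n + 1 + 1), gg q α (n + 1) i =
        (1 - q ^ (2 * (n + 1))) * (1 - q ^ (2 * (n + 1) + 1)) * S' -
          ∑ i ∈ Finset.range (n + 1 + 1),
            α i * ((1 - q ^ (n + 1 - i)) * (1 - q ^ (n + 1 + 2 + i))) /
              (qPoch q q (n + 1 - i) * qPoch (q ^ 3) q (n + 1 + i)) := by
      rw [hS', Finset.mul_sum, ← Finset.sum_sub_distrib]
      refine Finset.sum_congr rfl fun i hi => ?_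
      simp only [gg]
      ring
    have hT : ∑ i ∈ Finset.range (n + 1 + 1),
        α i * ((1 - q ^ (n + 1 - i)) * (1 - q ^ (n + 1 + 2 + i))) /
          (qPoch q q (n + 1 - i) * qPoch (q ^ 3) q (n + 1 + i)) =
        ∑ i ∈ Finset.range (n + 1), α i / (qPoch q q (n - i) * qPoch (q ^ 3) q (n + i)) := by
      rw [Finset.sum_range_succ]
      have hlast : α (n + 1) * ((1 - q ^ (n + 1 - (n + 1))) * (1 - q ^ (n + 1 + 2 + (n + 1)))) /
          (qPoch q q (n + 1 - (n + 1)) * qPoch (q ^ 3) q (n + 1 + (n + 1))) = 0 := by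
        rw [show n + 1 - (n + 1) = 0 from by omega, pow_zero]
        simp
      rw [hlast, add_zero]
      refine Finset.sum_congr rfl fun i hi => ?_
      have hi' : i ≤ n := by
        have := Finset.mem_range.mp hi; omega
      have hB := hq (n + i + 2)
      rw [show n + i + 2 + 1 = n + i + 3 from by omega] at hB
      rw [show n + 1 - i = n - i + 1 from by omega, P_succ q (n - i),
        show n + 1 + i = n + i + 1 from by omega, Q_succ q (n + i),
        show n + 1 + 2 + i = n + i + 3 from by omega]
      rw [div_eq_div_iff
        (mul_ne_zero (mul_ne_zero (P_ne q hq (n - i)) (hq (n - i)))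
          (mul_ne_zero (Q_ne q hq (n + i)) hB))
        (mul_ne_zero (P_ne q hq (n - i)) (Q_ne q hq (n + i)))]
      ring
    rw [hsum, hT, ← ih, sub_eq_zero] at hN
    have hK1 : (1 : ℂ) - q ^ (2 * (n + 1)) ≠ 0 := by
      have := hq (2 * n + 1); rwa [show 2 * n + 1 + 1 = 2 * (n + 1) from by omega] at this
    have hK2 : (1 : ℂ) - q ^ (2 * (n + 1) + 1) ≠ 0 := by
      have := hq (2 * n + 2); rwa [show 2 * n + 2 + 1 = 2 * (n + 1) + 1 from by omega] at this
    have hfin : S' = 1 / qPoch q q (2 * n + 1) /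
        ((1 - q ^ (2 * (n + 1))) * (1 - q ^ (2 * (n + 1) + 1))) := by
      rw [eq_div_iff (mul_ne_zero hK1 hK2)]
      linear_combination hN
    rw [hfin, div_div, show 2 * (n + 1) + 1 = 2 * n + 1 + 1 + 1 from by omega,
      P_succ q (2 * n + 1 + 1), P_succ q (2 * n + 1)]
    congr 1
    ring
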